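/- Let G be a finite simple graph, π = {W_1,…,W_d} a vertex clique-partition of G, e_π = {U_1,…,U_s} a clique cluster-partition based on π in which exactly s − r of the clusters U_i coincide with a single clique W_j, and let G^{cc} be the clique cluster-whiskered graph built from this data. Then every maximal independent vertex set V of G^{cc} satisfies d ≤ |V| ≤ d + r. -/
import Mathlib


namespace Paper

variable {V : Type*}

/-- `S` is an independent vertex set of the graph `H` (equivalently, of any induced
subgraph of `H` containing `S`): its vertices are pairwise non-adjacent. -/
def IndepOn (H : SimpleGraph V) (S : Set V) : Prop :=
  ∀ x ∈ S, ∀ y ∈ S, ¬ H.Adj x y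

/-- `S` is a maximal independent vertex set of the graph `H`. -/
def MaxIndep (H : SimpleGraph V) (S : Set V) : Prop :=
  IndepOn H S ∧ ∀ T : Set V, IndepOn H T → S ⊆ T → T = S

/-- The data exhibiting the graph `H` (on its full vertex type) as a clique
cluster-whiskered graph `G^{cc}` over the base graph `G` (the induced subgraph of `H`
on `Vg`), built from a vertex clique-partition `π = {W_1, …, W_d}` and a clique
cluster-partition `e_π = {U_1, …, U_s}` based on `π`, by adding `d + r` new vertices
`a_1, …, a_d, b_1, …, b_r`, where `a i` is adjacent exactly to the vertices of `W i`
and `b j` is adjacent exactly to the vertices of `U j`. -/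
structure CcWhiskered (H : SimpleGraph V) (d s r : ℕ) where
  hrs : r ≤ s
  /-- the vertex set of the base graph `G`; the edges of `G` are the edges of `H`
  between vertices of `Vg`, i.e. `G` is the induced subgraph of `H` on `Vg`. -/
  Vg : Set V
  /-- the vertex clique-partition `π = {W_1, …, W_d}` of `G` -/
  W : Fin d → Set V
  /-- the clique cluster-partition `e_π = {U_1, …, U_s}` based on `π` -/
  U : Fin s → Set V
  W_ne : ∀ i, (W i).Nonempty
  W_sub : ∀ i, W i ⊆ Vg
  W_disj : ∀ i j, i ≠ j → Disjoint (W i) (W j)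
  W_cover : Vg ⊆ ⋃ i, W i
  W_clique : ∀ i, ∀ x ∈ W i, ∀ y ∈ W i, x ≠ y → H.Adj x y
  U_ne : ∀ j, (U j).Nonempty
  U_sub : ∀ j, U j ⊆ Vg
  U_disj : ∀ j k, j ≠ k → Disjoint (U j) (U k)
  U_cover : Vg ⊆ ⋃ j, U j
  /-- each clique of `π` is contained in some cluster -/
  W_in_U : ∀ i, ∃ j, W i ⊆ U j
  /-- two distinct cliques of `π` lying in a common cluster have no edge between them -/
  cluster_indep : ∀ i i', i ≠ i' → ∀ j, W i ⊆ U j → W i' ⊆ U j →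
    ∀ x ∈ W i, ∀ y ∈ W i', ¬ H.Adj x y
  /-- the first `r` clusters are unions of at least two cliques of `π` -/
  U_multi : ∀ j : Fin r, ∃ i i' : Fin d, i ≠ i' ∧
    W i ⊆ U (Fin.castLE hrs j) ∧ W i' ⊆ U (Fin.castLE hrs j)
  /-- the remaining `s - r` clusters each coincide with a single clique of `π` -/
  U_single : ∀ j : Fin s, r ≤ (j : ℕ) → ∃ i, U j = W i
  /-- the added whisker vertices `a_1, …, a_d` -/
  a : Fin d → V
  /-- the added whisker vertices `b_1, …, b_r` -/
  b : Fin r → V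
  a_notin : ∀ i, a i ∉ Vg
  b_notin : ∀ j, b j ∉ Vg
  a_inj : Function.Injective a
  b_inj : Function.Injective b
  ab_ne : ∀ i j, a i ≠ b j
  /-- the vertex set of `G^{cc}` is `V(G)` together with the new vertices -/
  total : Set.univ = Vg ∪ Set.range a ∪ Set.range b
  /-- `a i` is adjacent exactly to the vertices of `W i` -/
  a_adj : ∀ i, ∀ w : V, H.Adj (a i) w ↔ w ∈ W i
  /-- `b j` is adjacent exactly to the vertices of `U j` -/
  b_adj : ∀ j, ∀ w : V, H.Adj (b j) w ↔ w ∈ U (Fin.castLE hrs j)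

/-- **Theorem.** For a clique cluster-whiskered graph `G^{cc}` built from a vertex
clique-partition `π = {W_1, …, W_d}` and a clique cluster-partition with exactly `r`
clusters that are unions of at least two cliques, every maximal independent vertex set
`S` of `G^{cc}` satisfies `d ≤ |S| ≤ d + r`. -/
theorem ccWhiskered_maxIndep_card_bounds [Fintype V]
    (H : SimpleGraph V) (d s r : ℕ) (M : CcWhiskered H d s r)
    (S : Set V) (hS : MaxIndep H S) :
    d ≤ S.ncard ∧ S.ncard ≤ d + r := by
  classical
  have hmem : ∀ x : V, (∃ i, x ∈ M.W i) ∨ (∃ i, x = M.a i) ∨ (∃ j, x = M.b j) := by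
    intro x
    have hx : x ∈ M.Vg ∪ Set.range M.a ∪ Set.range M.b := by
      rw [← M.total]; trivial
    rcases hx with (h | h) | h
    · exact Or.inl (Set.mem_iUnion.mp (M.W_cover h))
    · obtain ⟨i, hi⟩ := h; exact Or.inr (Or.inl ⟨i, hi.symm⟩)
    · obtain ⟨j, hj⟩ := h; exact Or.inr (Or.inr ⟨j, hj.symm⟩)
  -- lower bound
  have hpick : ∀ i : Fin d, ∃ x, x ∈ S ∧ (x ∈ M.W i ∨ x = M.a i) := by
    intro i
    by_contra hc
    push_neg at hc
    have hind : IndepOn H (insert (M.a i) S) := by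
      intro x hx y hy hadj
      rcases hx with hx | hx <;> rcases hy with hy | hy
      · subst hx; subst hy; exact H.irrefl hadj
      · subst hx
        exact (hc y hy).1 ((M.a_adj i y).mp hadj)
      · subst hy
        exact (hc x hx).1 ((M.a_adj i x).mp hadj.symm)
      · exact hS.1 x hx y hy hadj
    have heq := hS.2 _ hind (Set.subset_insert _ _)
    have hai : M.a i ∈ S := heq ▸ Set.mem_insert _ _
    exact (hc _ hai).2 rfl
  choose f hfS hfW using hpick
  have finj : Function.Injective f := by
    intro i j hij
    by_contra hne
    rcases hfW i with hi | hi <;> rcases hfW j with hj | hj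
    · exact (M.W_disj i j hne).ne_of_mem hi hj hij
    · exact M.a_notin j (M.W_sub i (by rwa [hij, hj] at hi))
    · exact M.a_notin i (M.W_sub j (by rwa [← hij, hi] at hj))
    · exact hne (M.a_inj (hi ▸ hj ▸ hij))
  have hlow : d ≤ S.ncard := by
    have h1 : (Finset.univ : Finset (Fin d)).card ≤ S.toFinset.card :=
      Finset.card_le_card_of_injOn f (fun i _ => Set.mem_toFinset.mpr (hfS i))
        (fun i _ j _ h => finj h)
    simpa [Set.ncard_eq_toFinset_card'] using h1
  -- upper bound
  set g : V → Fin d ⊕ Fin r := fun x =>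
    if h : ∃ i, x ∈ M.W i then Sum.inl h.choose
    else if h2 : ∃ i, x = M.a i then Sum.inl h2.choose
    else Sum.inr (((hmem x).resolve_left h).resolve_left h2).choose with hg
  have hg1 : ∀ x i, g x = Sum.inl i → x ∈ M.W i ∨ x = M.a i := by
    intro x i h
    simp only [hg] at h
    split_ifs at h with h1 h2
    · have := h1.choose_spec
      rw [Sum.inl.injEq] at h
      exact Or.inl (h ▸ this)
    · have := h2.choose_spec
      rw [Sum.inl.injEq] at h
      exact Or.inr (h ▸ this)
  have hg2 : ∀ x j, g x = Sum.inr j → x = M.b j := by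
    intro x j h
    simp only [hg] at h
    split_ifs at h with h1 h2
    have := (((hmem x).resolve_left h1).resolve_left h2).choose_spec
    rw [Sum.inr.injEq] at h
    exact h ▸ this
  have ginj : ∀ x ∈ S, ∀ y ∈ S, g x = g y → x = y := by
    intro x hx y hy hxy
    rcases hz : g x with i | j
    · rcases hg1 x i hz with h1 | h1 <;> rcases hg1 y i (hxy ▸ hz) with h2 | h2
      · by_contra hne
        exact hS.1 x hx y hy (M.W_clique i x h1 y h2 hne)
      · exact absurd ((M.a_adj i x).mpr h1) (h2 ▸ fun ha => hS.1 y hy x hx ha)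
      · exact absurd ((M.a_adj i y).mpr h2) (h1 ▸ fun ha => hS.1 x hx y hy ha)
      · rw [h1, h2]
    · rw [hg2 x j hz, hg2 y j (hxy ▸ hz)]
  have hup : S.ncard ≤ d + r := by
    have h1 : S.toFinset.card ≤ (Finset.univ : Finset (Fin d ⊕ Fin r)).card :=
      Finset.card_le_card_of_injOn g (fun x _ => Finset.mem_univ _)
        (fun x hx y hy h => ginj x (Set.mem_toFinset.mp hx) y (Set.mem_toFinset.mp hy) h)
    simpa [Set.ncard_eq_toFinset_card'] using h1
  exact ⟨hlow, hup⟩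

end Paper
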